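/- Let γ^i_j satisfy the Darboux–Egoroff system on a connected open set U ⊆ ℂ^N, and let (R_k)_{k≥0} and (R'_k)_{k≥0} be two sequences of holomorphic matrix-valued functions on U with R_0 = R'_0 = Id, both satisfying, for all k ≥ 1 and all indices i,j,l, ∂_l (R_{k−1})^i_j + Σ_{m=1}^N (R_{k−1})^i_m γ^m_j (δ_{lj} − δ_{lm}) = (R_k)^i_j (δ_{lj} − δ_{li}) (and the same equations for R'). Then there exist constant diagonal matrices D_1, D_2, … ∈ Mat_{N×N}(ℂ) such that, setting D_0 := Id, one has R'_k = Σ_{i=0}^k D_i R_{k−i} for all k ≥ 0; equivalently Id + Σ_{k≥1} R'_k z^k = (Id + Σ_{k≥1} D_k z^k)(Id + Σ_{k≥1} R_k z^k) as formal power series in z. -/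

import Mathlib

noncomputable section

variable {N : ℕ}

/-- The partial derivative `∂_k = ∂/∂u^k` of a function of `N` complex variables. -/
def pder (k : Fin N) (f : (Fin N → ℂ) → ℂ) : (Fin N → ℂ) → ℂ :=
  fun u => fderiv ℂ f u (Pi.single k 1)

/-- Kronecker delta. -/
def kron (i j : Fin N) : ℂ := if i = j then 1 else 0

/-- The Darboux–Egoroff system for the rotation coefficients `γ^i_j` (`i ≠ j`) on `U`. -/
def DarbouxEgoroff (U : Set (Fin N → ℂ)) (γ : Fin N → Fin N → (Fin N → ℂ) → ℂ) : Prop :=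
  (∀ i j k : Fin N, i ≠ j → j ≠ k → i ≠ k → ∀ u ∈ U,
      pder k (γ i j) u = γ i k u * γ k j u) ∧
  (∀ i j : Fin N, i ≠ j → ∀ u ∈ U, ∑ k, pder k (γ i j) u = 0)

/-- The componentwise form of the matrix 1-form equations
`dR_{k−1} + R_{k−1}[Γ,dU] = [R_k,dU]` (for all `k ≥ 1`), where `U = diag(u^1,…,u^N)` and
`[Γ,dU]^i_j = γ^i_j (du^j − du^i)`:
`∂_l (R_{k−1})^i_j + Σ_m (R_{k−1})^i_m γ^m_j (δ_{lj} − δ_{lm}) = (R_k)^i_j (δ_{lj} − δ_{li})`. -/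
def RMatrixEqs (U : Set (Fin N → ℂ)) (γ : Fin N → Fin N → (Fin N → ℂ) → ℂ)
    (R : ℕ → Fin N → Fin N → (Fin N → ℂ) → ℂ) : Prop :=
  ∀ (k : ℕ) (i j l : Fin N), ∀ u ∈ U,
    pder l (R k i j) u + ∑ m, R k i m u * γ m j u * (kron l j - kron l m)
      = R (k + 1) i j u * (kron l j - kron l i)

/-- Auxiliary recursively defined sequence: `dAux f g 0 = 1` and
`dAux f g (k+1) = f (k+1) - Σ_{a<k+1} dAux f g a * g (k+1-a)`. -/
def dAux (f g : ℕ → ℂ) : ℕ → ℂ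
  | 0 => 1
  | (k+1) => f (k+1) - ∑ a : Fin (k+1), dAux f g a * g (k+1-a)

lemma dAux_succ (f g : ℕ → ℂ) (k : ℕ) :
    dAux f g (k+1) = f (k+1) - ∑ a ∈ Finset.range (k+1), dAux f g a * g (k+1-a) := by
  rw [dAux, Finset.sum_range fun a => dAux f g a * g (k+1-a)]

lemma pder_congr {U : Set (Fin N → ℂ)} (hU : IsOpen U) {f g : (Fin N → ℂ) → ℂ}
    (h : ∀ u ∈ U, f u = g u) {u : Fin N → ℂ} (hu : u ∈ U) (l : Fin N) :
    pder l f u = pder l g u := by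
  unfold pder
  congr 1
  apply Filter.EventuallyEq.fderiv_eq
  filter_upwards [hU.mem_nhds hu] with x hx using h x hx

lemma pder_lincomb {s : Finset ℕ} {c : ℕ → ℂ} {f : ℕ → (Fin N → ℂ) → ℂ} {u : Fin N → ℂ}
    (hf : ∀ a ∈ s, DifferentiableAt ℂ (f a) u) (l : Fin N) :
    pder l (fun u => ∑ a ∈ s, c a * f a u) u = ∑ a ∈ s, c a * pder l (f a) u := by
  unfold pder
  rw [fderiv_fun_sum (fun a ha => ((hf a ha).const_mul (c a))), ContinuousLinearMap.sum_apply]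
  refine Finset.sum_congr rfl fun a ha => ?_
  rw [fderiv_const_mul (hf a ha), ContinuousLinearMap.smul_apply, smul_eq_mul]

lemma pder_sub {f g : (Fin N → ℂ) → ℂ} {u : Fin N → ℂ}
    (hf : DifferentiableAt ℂ f u) (hg : DifferentiableAt ℂ g u) (l : Fin N) :
    pder l (fun u => f u - g u) u = pder l f u - pder l g u := by
  unfold pder
  rw [fderiv_fun_sub hf hg, ContinuousLinearMap.sub_apply]

lemma const_of_pder {U : Set (Fin N → ℂ)} (hU : IsOpen U) (hconn : IsPreconnected U)
    {f : (Fin N → ℂ) → ℂ} (hf : DifferentiableOn ℂ f U)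
    (hd : ∀ (l : Fin N), ∀ u ∈ U, pder l f u = 0)
    {u v : Fin N → ℂ} (hu : u ∈ U) (hv : v ∈ U) : f u = f v := by
  have hfd : ∀ w ∈ U, fderiv ℂ f w = 0 := by
    intro w hw
    ext x
    have hx : (x : Fin N → ℂ) = ∑ l, x l • (Pi.single l 1 : Fin N → ℂ) := by
      ext j
      simp [Pi.single_apply, Finset.sum_ite_eq', mul_comm]
    rw [ContinuousLinearMap.zero_apply, hx, map_sum]
    refine Finset.sum_eq_zero fun l _ => ?_
    rw [map_smul]
    have := hd l w hw
    unfold pder at this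
    rw [this, smul_zero]
  have hloc : ∀ w ∈ U, ∃ ε > 0, Metric.ball w ε ⊆ U ∧ ∀ x ∈ Metric.ball w ε, f x = f w := by
    intro w hw
    obtain ⟨ε, hε, hball⟩ := Metric.isOpen_iff.1 hU w hw
    refine ⟨ε, hε, hball, fun x hx => ?_⟩
    refine (convex_ball w ε).is_const_of_fderivWithin_eq_zero (hf.mono hball)
      (fun y hy => ?_) hx (Metric.mem_ball_self hε)
    rw [fderivWithin_of_isOpen Metric.isOpen_ball hy]
    exact hfd y (hball hy)
  by_contra hne
  have hBopen : IsOpen {w | w ∈ U ∧ f w = f u} := by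
    refine Metric.isOpen_iff.2 fun w hw => ?_
    obtain ⟨ε, hε, hb, hc⟩ := hloc w hw.1
    exact ⟨ε, hε, fun x hx => ⟨hb hx, (hc x hx).trans hw.2⟩⟩
  have hCopen : IsOpen {w | w ∈ U ∧ f w ≠ f u} := by
    refine Metric.isOpen_iff.2 fun w hw => ?_
    obtain ⟨ε, hε, hb, hc⟩ := hloc w hw.1
    exact ⟨ε, hε, fun x hx => ⟨hb hx, by rw [hc x hx]; exact hw.2⟩⟩
  obtain ⟨w, hwU, h1, h2⟩ := hconn _ _ hBopen hCopen
    (fun w hw => by by_cases h : f w = f u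
                    · exact Or.inl ⟨hw, h⟩
                    · exact Or.inr ⟨hw, h⟩)
    ⟨u, hu, hu, rfl⟩ ⟨v, hv, hv, fun h => hne h.symm⟩
  exact h2.2 h1.2

/-- On a connected open set, two sequences of `R`-matrices for the same
solution of the Darboux–Egoroff system differ by the left multiplication by a power series
`Id + Σ_{k≥1} D_k z^k` with constant diagonal coefficients. -/
theorem statement7 {N : ℕ} (hN : 2 ≤ N) (U : Set (Fin N → ℂ))
    (hU : IsOpen U) (hconn : IsConnected U)
    (γ : Fin N → Fin N → (Fin N → ℂ) → ℂ)
    (hdiag : ∀ i : Fin N, ∀ u, γ i i u = 0)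
    (hhol : ∀ i j : Fin N, DifferentiableOn ℂ (γ i j) U)
    (hDE : DarbouxEgoroff U γ)
    (R R' : ℕ → Fin N → Fin N → (Fin N → ℂ) → ℂ)
    (hR0 : ∀ i j : Fin N, ∀ u ∈ U, R 0 i j u = kron i j)
    (hR'0 : ∀ i j : Fin N, ∀ u ∈ U, R' 0 i j u = kron i j)
    (hRhol : ∀ (k : ℕ) (i j : Fin N), DifferentiableOn ℂ (R k i j) U)
    (hR'hol : ∀ (k : ℕ) (i j : Fin N), DifferentiableOn ℂ (R' k i j) U)
    (hReqs : RMatrixEqs U γ R) (hR'eqs : RMatrixEqs U γ R') :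
    ∃ D : ℕ → Matrix (Fin N) (Fin N) ℂ,
      D 0 = 1 ∧
      (∀ (k : ℕ) (i j : Fin N), i ≠ j → D k i j = 0) ∧
      (∀ (k : ℕ) (i j : Fin N), ∀ u ∈ U,
        R' k i j u = ∑ a ∈ Finset.range (k + 1), ∑ m, D a i m * R (k - a) m j u) := by
  obtain ⟨u₀, hu₀⟩ := hconn.nonempty
  set d : ℕ → Fin N → ℂ := fun k i => dAux (fun m => R' m i i u₀) (fun m => R m i i u₀) k
    with hd_def
  have hd0 : ∀ i, d 0 i = 1 := fun i => by
    show dAux (fun m => R' m i i u₀) (fun m => R m i i u₀) 0 = 1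
    rw [dAux]
  have hdiffR : ∀ (k : ℕ) (i j : Fin N), ∀ u ∈ U, DifferentiableAt ℂ (R k i j) u :=
    fun k i j u hu => (hRhol k i j).differentiableAt (hU.mem_nhds hu)
  have hdiffR' : ∀ (k : ℕ) (i j : Fin N), ∀ u ∈ U, DifferentiableAt ℂ (R' k i j) u :=
    fun k i j u hu => (hR'hol k i j).differentiableAt (hU.mem_nhds hu)
  have key : ∀ k : ℕ, ∀ i j : Fin N, ∀ u ∈ U,
      R' k i j u = ∑ a ∈ Finset.range (k+1), d a i * R (k-a) i j u := by
    intro k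
    induction k with
    | zero =>
      intro i j u hu
      rw [Finset.sum_range_one, Nat.sub_zero, hR'0 i j u hu, hR0 i j u hu, hd0 i, one_mul]
    | succ k ih =>
      have offdiag : ∀ i j : Fin N, i ≠ j → ∀ u ∈ U,
          R' (k+1) i j u = ∑ a ∈ Finset.range (k+1), d a i * R (k+1-a) i j u := by
        intro i j hij u hu
        have hji : j ≠ i := hij.symm
        have hkjj : kron j j = 1 := by simp [kron]
        have hkji : kron j i = 0 := by simp [kron, hji]
        have heq := hR'eqs k i j j u hu
        rw [hkjj, hkji, sub_zero, mul_one] at heq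
        have hp : pder j (R' k i j) u
            = ∑ a ∈ Finset.range (k+1), d a i * pder j (R (k-a) i j) u := by
          rw [pder_congr hU (fun u hu => ih i j u hu) hu j]
          exact pder_lincomb (fun a _ => hdiffR (k-a) i j u hu) j
        have hsum : ∑ m, R' k i m u * γ m j u * (1 - kron j m)
            = ∑ a ∈ Finset.range (k+1), d a i *
                ∑ m, R (k-a) i m u * γ m j u * (1 - kron j m) := by
          calc ∑ m, R' k i m u * γ m j u * (1 - kron j m)
              = ∑ m, ∑ a ∈ Finset.range (k+1),
                  d a i * (R (k-a) i m u * γ m j u * (1 - kron j m)) := by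
                refine Finset.sum_congr rfl fun m _ => ?_
                rw [ih i m u hu, Finset.sum_mul, Finset.sum_mul]
                exact Finset.sum_congr rfl fun a _ => by ring
            _ = _ := by
                rw [Finset.sum_comm]
                exact Finset.sum_congr rfl fun a _ => (Finset.mul_sum _ _ _).symm
        rw [hp, hsum] at heq
        rw [← heq, ← Finset.sum_add_distrib]
        refine Finset.sum_congr rfl fun a ha => ?_
        have h2 := hReqs (k-a) i j j u hu
        rw [hkjj, hkji, sub_zero, mul_one] at h2
        have hidx : k - a + 1 = k + 1 - a :=
          (Nat.succ_sub (Nat.lt_succ_iff.mp (Finset.mem_range.mp ha))).symm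
        rw [← mul_add, h2, hidx]
      have diagstep : ∀ i : Fin N, ∀ u ∈ U,
          R' (k+1) i i u - ∑ a ∈ Finset.range (k+1), d a i * R (k+1-a) i i u
            = d (k+1) i := by
        intro i
        set F : (Fin N → ℂ) → ℂ :=
          fun u => R' (k+1) i i u - ∑ a ∈ Finset.range (k+1), d a i * R (k+1-a) i i u with hF
        have hFdiff : DifferentiableOn ℂ F U := by
          refine (hR'hol (k+1) i i).sub (DifferentiableOn.fun_sum fun a _ => ?_)
          exact (hRhol (k+1-a) i i).const_mul (d a i)
        have hFd : ∀ (l : Fin N), ∀ u ∈ U, pder l F u = 0 := by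
          intro l u hu
          have hgdiff : DifferentiableAt ℂ
              (fun u => ∑ a ∈ Finset.range (k+1), d a i * R (k+1-a) i i u) u :=
            DifferentiableAt.fun_sum fun a _ => (hdiffR (k+1-a) i i u hu).const_mul (d a i)
          have hps : pder l F u = pder l (R' (k+1) i i) u
              - ∑ a ∈ Finset.range (k+1), d a i * pder l (R (k+1-a) i i) u := by
            rw [hF, pder_sub (hdiffR' (k+1) i i u hu) hgdiff l]
            congr 1
            exact pder_lincomb (fun a _ => hdiffR (k+1-a) i i u hu) l
          have e1 := hR'eqs (k+1) i i l u hu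
          rw [sub_self, mul_zero] at e1
          have e2 : ∀ a ∈ Finset.range (k+1),
              pder l (R (k+1-a) i i) u
                = - ∑ m, R (k+1-a) i m u * γ m i u * (kron l i - kron l m) := by
            intro a ha
            have h3 := hReqs (k+1-a) i i l u hu
            rw [sub_self, mul_zero] at h3
            exact eq_neg_of_add_eq_zero_left h3
          have hptw : ∀ m, R' (k+1) i m u * γ m i u * (kron l i - kron l m)
              = ∑ a ∈ Finset.range (k+1),
                  d a i * (R (k+1-a) i m u * γ m i u * (kron l i - kron l m)) := by
            intro m
            by_cases hm : m = i
            · subst hm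
              simp [hdiag m u]
            · rw [offdiag i m (fun h => hm h.symm) u hu, Finset.sum_mul, Finset.sum_mul]
              exact Finset.sum_congr rfl fun a _ => by ring
          have hswap : ∑ m, R' (k+1) i m u * γ m i u * (kron l i - kron l m)
              = ∑ a ∈ Finset.range (k+1), d a i *
                  ∑ m, R (k+1-a) i m u * γ m i u * (kron l i - kron l m) := by
            rw [Finset.sum_congr rfl fun m _ => hptw m, Finset.sum_comm]
            exact Finset.sum_congr rfl fun a _ => (Finset.mul_sum _ _ _).symm
          rw [hps, eq_neg_of_add_eq_zero_left e1, hswap,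
            Finset.sum_congr rfl (fun a ha => by rw [e2 a ha] :
              ∀ a ∈ Finset.range (k+1), d a i * pder l (R (k+1-a) i i) u
                = d a i * -∑ m, R (k+1-a) i m u * γ m i u * (kron l i - kron l m))]
          simp only [mul_neg, Finset.sum_neg_distrib, sub_neg_eq_add, neg_add_cancel]
        intro u hu
        have hc := const_of_pder hU hconn.isPreconnected hFdiff hFd hu hu₀
        have hFu0 : F u₀ = d (k+1) i :=
          (dAux_succ (fun m => R' m i i u₀) (fun m => R m i i u₀) k).symm
        exact hc.trans hFu0
      intro i j u hu
      rw [Finset.sum_range_succ, Nat.sub_self]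
      by_cases hij : i = j
      · subst hij
        have h0 : R 0 i i u = 1 := by rw [hR0 i i u hu]; simp [kron]
        rw [h0, mul_one]
        have hds := diagstep i u hu
        rw [← hds]; ring
      · have h0 : R 0 i j u = 0 := by rw [hR0 i j u hu]; simp [kron, hij]
        rw [h0, mul_zero, add_zero]
        exact offdiag i j hij u hu
  refine ⟨fun a => Matrix.diagonal (fun i => d a i), ?_, ?_, ?_⟩
  · ext i j
    by_cases hij : i = j
    · subst hij; simp [Matrix.diagonal_apply_eq, hd0]
    · simp [Matrix.diagonal_apply_ne _ hij, Matrix.one_apply_ne hij]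
  · exact fun k i j hij => Matrix.diagonal_apply_ne _ hij
  · intro k i j u hu
    rw [key k i j u hu]
    refine Finset.sum_congr rfl fun a _ => ?_
    have hsi : ∑ m, Matrix.diagonal (fun i => d a i) i m * R (k-a) m j u
        = d a i * R (k-a) i j u := by
      rw [Finset.sum_eq_single i (fun m _ hmi => by
            rw [Matrix.diagonal_apply_ne _ (Ne.symm hmi), zero_mul])
          (fun h => absurd (Finset.mem_univ i) h), Matrix.diagonal_apply_eq]
    exact hsi.symm

end
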